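/- arXiv:2106.07731 — 3 statements merged into one kernel-verified Lean document; each statement's English description precedes it below -/
import Mathlib

section
/- Schwartz–Zippel-type zero-counting: Let P be a nonzero polynomial in v variables over a field F, and let d_j be defined inductively as the degree of α_j in the polynomial P_j obtained as the leading coefficient chain (P_1 = P, P_{j+1} = coefficient of α_j^{d_j} in P_j). If S_1,...,S_v are finite subsets of F, then P has at most |S_1 × ... × S_v| · (d_1/|S_1| + ... + d_v/|S_v|) zeros in S_1 × ... × S_v. -/
open Finset

/-- The coefficient of `α_j^d` in `P`, viewed as a polynomial in the variable `α_j`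
(a multivariate polynomial in the remaining variables). -/
noncomputable def coeffOfVar {F : Type*} [CommRing F] {v : ℕ} (j : Fin v) (d : ℕ)
    (P : MvPolynomial (Fin v) F) : MvPolynomial (Fin v) F :=
  ∑ m ∈ P.support.filter (fun m => m j = d),
    MvPolynomial.monomial (m - Finsupp.single j d) (P.coeff m)

section SZAux
open MvPolynomial

lemma coeff_coeffOfVar {F : Type*} [CommRing F] {v : ℕ} (j : Fin v) (e : ℕ)
    (P : MvPolynomial (Fin v) F) (m : Fin v →₀ ℕ) :
    (coeffOfVar j e P).coeff m =
      if m j = 0 then P.coeff (m + Finsupp.single j e) else 0 := by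
  unfold coeffOfVar
  rw [MvPolynomial.coeff_sum]
  simp only [MvPolynomial.coeff_monomial]
  by_cases hm : m j = 0
  · rw [if_pos hm]
    rw [Finset.sum_congr rfl (g := fun m' => if m' = m + Finsupp.single j e then P.coeff m' else 0)]
    · rw [Finset.sum_ite_eq' (P.support.filter (fun m => m j = e)) (m + Finsupp.single j e)
        (fun m' => P.coeff m')]
      by_cases hmem : m + Finsupp.single j e ∈ P.support.filter (fun m => m j = e)
      · rw [if_pos hmem]
      · rw [if_neg hmem]
        by_contra h
        apply hmem
        rw [Finset.mem_filter]
        refine ⟨MvPolynomial.mem_support_iff.2 (Ne.symm h), ?_⟩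
        simp [hm]
    · intro m' hm'
      simp only [Finset.mem_filter] at hm'
      refine if_congr ?_ rfl rfl
      constructor
      · rintro rfl
        ext a
        by_cases ha : a = j
        · subst ha
          simp [hm'.2]
        · simp [Finsupp.single_apply, Ne.symm ha, ha]
      · rintro rfl
        ext a
        by_cases ha : a = j
        · subst ha
          simp [hm]
        · simp [Finsupp.single_apply, Ne.symm ha, ha]
  · rw [if_neg hm]
    apply Finset.sum_eq_zero
    intro m' hm'
    simp only [Finset.mem_filter] at hm'
    rw [if_neg]
    intro h
    apply hm
    rw [← h]
    simp [hm'.2]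

lemma mapDomain_fin_succ {n : ℕ} (m : Fin n →₀ ℕ) :
    Finsupp.mapDomain Fin.succ m = Finsupp.cons 0 m := by
  ext a
  refine Fin.cases ?_ (fun i => ?_) a
  · rw [Finsupp.cons_zero, Finsupp.mapDomain_notin_range]
    simp [Fin.succ_ne_zero]
  · rw [Finsupp.cons_succ, Finsupp.mapDomain_apply (Fin.succ_injective n)]

lemma coeffOfVar_zero_eq {F : Type*} [CommRing F] {n : ℕ} (e : ℕ)
    (P : MvPolynomial (Fin (n + 1)) F) :
    coeffOfVar 0 e P = rename Fin.succ ((finSuccEquiv F n P).coeff e) := by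
  apply MvPolynomial.ext
  intro m
  rw [coeff_coeffOfVar]
  by_cases hm : m 0 = 0
  · rw [if_pos hm]
    have hm' : m = Finsupp.mapDomain Fin.succ (Finsupp.tail m) := by
      rw [mapDomain_fin_succ, ← hm, Finsupp.cons_tail]
    rw [hm', coeff_rename_mapDomain _ (Fin.succ_injective n), finSuccEquiv_coeff_coeff]
    congr 1
    rw [← hm']
    ext a
    refine Fin.cases ?_ (fun i => ?_) a
    · simp [hm]
    · simp [Finsupp.single_apply, (Fin.succ_ne_zero i).symm, Ne.symm (Fin.succ_ne_zero i),
        Finsupp.tail_apply]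
  · rw [if_neg hm]
    symm
    apply coeff_rename_eq_zero
    intro u hu
    exfalso
    apply hm
    rw [← hu, mapDomain_fin_succ, Finsupp.cons_zero]

lemma coeffOfVar_succ_rename {F : Type*} [CommRing F] {n : ℕ} (j : Fin n) (e : ℕ)
    (R : MvPolynomial (Fin n) F) :
    coeffOfVar j.succ e (rename Fin.succ R) = rename Fin.succ (coeffOfVar j e R) := by
  apply MvPolynomial.ext
  intro m
  rw [coeff_coeffOfVar]
  by_cases hm0 : m 0 = 0
  · have hm' : m = Finsupp.mapDomain Fin.succ (Finsupp.tail m) := by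
      rw [mapDomain_fin_succ, ← hm0, Finsupp.cons_tail]
    set m' : Fin n →₀ ℕ := Finsupp.tail m with hm'def
    rw [hm', coeff_rename_mapDomain _ (Fin.succ_injective n), coeff_coeffOfVar,
      Finsupp.mapDomain_apply (Fin.succ_injective n)]
    by_cases hj : m' j = 0
    · rw [if_pos hj, if_pos hj]
      have : Finsupp.mapDomain Fin.succ m' + Finsupp.single j.succ e
          = Finsupp.mapDomain Fin.succ (m' + Finsupp.single j e) := by
        rw [Finsupp.mapDomain_add, Finsupp.mapDomain_single]
      rw [this, coeff_rename_mapDomain _ (Fin.succ_injective n)]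
    · rw [if_neg hj, if_neg hj]
  · have hrhs : coeff m ((rename Fin.succ) (coeffOfVar j e R)) = 0 := by
      apply coeff_rename_eq_zero
      intro u hu
      exfalso
      apply hm0
      rw [← hu, mapDomain_fin_succ, Finsupp.cons_zero]
    rw [hrhs]
    by_cases hj : m j.succ = 0
    · rw [if_pos hj]
      apply coeff_rename_eq_zero
      intro u hu
      exfalso
      apply hm0
      have : (Finsupp.mapDomain Fin.succ u) 0 = 0 := by
        rw [mapDomain_fin_succ, Finsupp.cons_zero]
      rw [hu] at this
      exact (by simpa [Finsupp.single_apply, (Fin.succ_ne_zero j).symm] using this : m 0 = 0 ∧ (j.succ = 0 → e = 0)).1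
    · rw [if_neg hj]

lemma card_filter_roots_le {F : Type*} [Field F] [DecidableEq F] (q : Polynomial F)
    (hq : q ≠ 0) (S : Finset F) :
    (S.filter (fun x => q.eval x = 0)).card ≤ q.natDegree := by
  calc (S.filter (fun x => q.eval x = 0)).card ≤ q.roots.toFinset.card := by
        apply Finset.card_le_card
        intro x hx
        rw [Finset.mem_filter] at hx
        rw [Multiset.mem_toFinset, Polynomial.mem_roots hq]
        exact hx.2
    _ ≤ Multiset.card q.roots := Multiset.toFinset_card_le _
    _ ≤ q.natDegree := Polynomial.card_roots' q

lemma sum_piFinset_succ {F : Type*} [DecidableEq F] {n : ℕ} (S : Fin (n + 1) → Finset F)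
    (G : (Fin (n + 1) → F) → ℕ) :
    ∑ f ∈ Fintype.piFinset S, G f
      = ∑ g ∈ Fintype.piFinset (fun j : Fin n => S j.succ), ∑ x ∈ S 0, G (Fin.cons x g) := by
  rw [Finset.sum_sigma']
  apply Finset.sum_nbij' (fun f => ⟨fun j => f j.succ, f 0⟩)
    (fun p => Fin.cons p.2 p.1)
  · intro f hf
    rw [Fintype.mem_piFinset] at hf
    exact Finset.mem_sigma.2 ⟨Fintype.mem_piFinset.2 fun j => hf j.succ, hf 0⟩
  · intro p hp
    rw [Finset.mem_sigma] at hp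
    rw [Fintype.mem_piFinset]
    intro a
    refine Fin.cases ?_ (fun i => ?_) a
    · simpa using hp.2
    · simpa using Fintype.mem_piFinset.1 hp.1 i
  · intro f _
    funext a
    refine Fin.cases ?_ (fun i => ?_) a <;> simp
  · intro p _
    simp
  · intro f _
    congr 1
    funext a
    refine Fin.cases ?_ (fun i => ?_) a <;> simp

noncomputable def covChain {F : Type*} [CommRing F] {n : ℕ} (L : MvPolynomial (Fin n) F) :
    ℕ → MvPolynomial (Fin n) F
  | 0 => L
  | (k + 1) =>
      if h : k < n then
        coeffOfVar ⟨k, h⟩ (MvPolynomial.degreeOf ⟨k, h⟩ (covChain L k)) (covChain L k)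
      else 0

lemma chain_eq {F : Type*} [CommRing F] {n : ℕ} (P : MvPolynomial (Fin (n + 1)) F)
    (Q : ℕ → MvPolynomial (Fin (n + 1)) F) (d : Fin (n + 1) → ℕ)
    (hQ0 : Q 0 = P)
    (hd : ∀ j : Fin (n + 1), d j = MvPolynomial.degreeOf j (Q j))
    (hQ : ∀ j : Fin (n + 1), Q ((j : ℕ) + 1) = coeffOfVar j (d j) (Q (j : ℕ))) :
    ∀ k : ℕ, k < n →
      Q (k + 1) = rename Fin.succ (covChain (Polynomial.coeff (finSuccEquiv F n P) (d 0)) k) := by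
  intro k
  induction k with
  | zero =>
    intro _
    have h0 := hQ 0
    simp only [Fin.val_zero] at h0
    rw [h0, hQ0, coeffOfVar_zero_eq]
    rfl
  | succ k ihk =>
    intro hk1
    have hk : k < n := Nat.lt_of_succ_lt hk1
    set js : Fin n := ⟨k, hk⟩ with hjs
    have hjb : ((js.succ : Fin (n + 1)) : ℕ) = k + 1 := rfl
    have h1 := hQ js.succ
    rw [hjb] at h1
    have hih := ihk hk
    have hdval : d js.succ = MvPolynomial.degreeOf js
        (covChain (Polynomial.coeff (finSuccEquiv F n P) (d 0)) k) := by
      rw [hd js.succ, hjb, hih, MvPolynomial.degreeOf_rename_of_injective (Fin.succ_injective n)]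
    rw [h1, hih, hdval, coeffOfVar_succ_rename]
    congr 1
    simp only [covChain]
    rw [dif_pos hk]

theorem sz_aux {F : Type*} [Field F] [DecidableEq F] : ∀ (v : ℕ)
    (P : MvPolynomial (Fin v) F), P ≠ 0 →
    ∀ (Q : ℕ → MvPolynomial (Fin v) F) (d : Fin v → ℕ),
    Q 0 = P →
    (∀ j : Fin v, d j = MvPolynomial.degreeOf j (Q j)) →
    (∀ j : Fin v, Q ((j : ℕ) + 1) = coeffOfVar j (d j) (Q (j : ℕ))) →
    ∀ (S : Fin v → Finset F), (∀ j, (S j).Nonempty) →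
    (((Fintype.piFinset S).filter (fun f => MvPolynomial.eval f P = 0)).card : ℚ)
      ≤ (∏ j : Fin v, ((S j).card : ℚ)) * ∑ j : Fin v, (d j : ℚ) / ((S j).card : ℚ) := by
  intro v
  induction v with
  | zero =>
    intro P hP Q d _ _ _ S _
    have hfilter : (Fintype.piFinset S).filter (fun f => MvPolynomial.eval f P = 0) = ∅ := by
      apply Finset.filter_eq_empty_iff.2
      intro f _
      have : MvPolynomial.eval f P = (isEmptyAlgEquiv F (Fin 0)) P := by
        conv_lhs => rw [← (isEmptyAlgEquiv F (Fin 0)).symm_apply_apply P]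
        rw [isEmptyAlgEquiv_symm_apply, eval_C]
      rw [this]
      intro h0
      exact hP ((map_eq_zero_iff _ (isEmptyAlgEquiv F (Fin 0)).injective).1 h0)
    rw [hfilter]
    simp
  | succ n ih =>
    intro P hP Q d hQ0 hd hQ S hS
    set p : Polynomial (MvPolynomial (Fin n) F) := finSuccEquiv F n P with hp_def
    have hp : p ≠ 0 := by
      intro h
      apply hP
      rw [← (finSuccEquiv F n).symm_apply_apply P, ← hp_def, h, map_zero]
    have hd0 : p.natDegree = d 0 := by
      rw [hd 0]
      show p.natDegree = MvPolynomial.degreeOf 0 (Q ((0 : Fin (n+1)) : ℕ))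
      rw [Fin.val_zero, hQ0]
      exact natDegree_finSuccEquiv P
    set L : MvPolynomial (Fin n) F := p.coeff (d 0) with hL_def
    have hL : L ≠ 0 := by
      rw [hL_def, ← hd0]
      exact Polynomial.leadingCoeff_ne_zero.2 hp
    set T := Fintype.piFinset (fun j : Fin n => S j.succ) with hT
    set B := T.filter (fun g => MvPolynomial.eval g L = 0) with hB
    -- counting decomposition
    have hcount : ((Fintype.piFinset S).filter (fun f => MvPolynomial.eval f P = 0)).card
        = ∑ g ∈ T, ((S 0).filter (fun x => MvPolynomial.eval (Fin.cons x g) P = 0)).card := by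
      rw [Finset.card_filter, sum_piFinset_succ S (fun f => if MvPolynomial.eval f P = 0 then 1 else 0)]
      refine Finset.sum_congr rfl fun g _ => ?_
      rw [Finset.card_filter]
    -- per-g bounds
    have hgood : ∀ g ∈ T, MvPolynomial.eval g L ≠ 0 →
        ((S 0).filter (fun x => MvPolynomial.eval (Fin.cons x g) P = 0)).card ≤ d 0 := by
      intro g _ hgL
      have hq : Polynomial.map (MvPolynomial.eval g) p ≠ 0 := by
        intro h
        apply hgL
        have : (Polynomial.map (MvPolynomial.eval g) p).coeff (d 0) = MvPolynomial.eval g L := by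
          rw [hL_def, Polynomial.coeff_map]
        rw [h] at this
        simpa using this.symm
      have heval : ∀ x, MvPolynomial.eval (Fin.cons x g) P
          = Polynomial.eval x (Polynomial.map (MvPolynomial.eval g) p) := fun x =>
        eval_eq_eval_mv_eval' g x P
      calc ((S 0).filter (fun x => MvPolynomial.eval (Fin.cons x g) P = 0)).card
          = ((S 0).filter (fun x =>
              Polynomial.eval x (Polynomial.map (MvPolynomial.eval g) p) = 0)).card := by
            congr 1; apply Finset.filter_congr; intro x _; rw [heval x]
        _ ≤ (Polynomial.map (MvPolynomial.eval g) p).natDegree :=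
            card_filter_roots_le _ hq _
        _ ≤ p.natDegree := Polynomial.natDegree_map_le
        _ = d 0 := hd0
    -- total bound in ℕ
    have htotal : ((Fintype.piFinset S).filter (fun f => MvPolynomial.eval f P = 0)).card
        ≤ B.card * (S 0).card + T.card * d 0 := by
      rw [hcount, ← Finset.sum_filter_add_sum_filter_not T (fun g => MvPolynomial.eval g L = 0)]
      gcongr with g hg g hg
      · calc ∑ g ∈ B, ((S 0).filter (fun x => MvPolynomial.eval (Fin.cons x g) P = 0)).card
            ≤ ∑ _g ∈ B, (S 0).card := Finset.sum_le_sum fun g _ => Finset.card_filter_le _ _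
          _ = B.card * (S 0).card := by rw [Finset.sum_const, smul_eq_mul]
      · calc ∑ g ∈ T.filter (fun g => ¬ MvPolynomial.eval g L = 0),
              ((S 0).filter (fun x => MvPolynomial.eval (Fin.cons x g) P = 0)).card
            ≤ ∑ _g ∈ T.filter (fun g => ¬ MvPolynomial.eval g L = 0), d 0 :=
              Finset.sum_le_sum fun g hg => by
                rw [Finset.mem_filter] at hg
                exact hgood g hg.1 hg.2
          _ ≤ T.card * d 0 := by
              rw [Finset.sum_const, smul_eq_mul]
              exact Nat.mul_le_mul_right _ (Finset.card_filter_le _ _)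
    -- inductive hypothesis on L
    have hchain := chain_eq P Q d hQ0 hd hQ
    have hdsucc : ∀ j : Fin n, d j.succ = MvPolynomial.degreeOf j (covChain L (j : ℕ)) := by
      intro j
      have h1 : d j.succ = MvPolynomial.degreeOf j.succ (Q ((j : ℕ) + 1)) := by
        rw [hd j.succ, Fin.val_succ]
      rw [h1, hchain (j : ℕ) j.isLt,
        MvPolynomial.degreeOf_rename_of_injective (Fin.succ_injective n)]
    have hih := ih L hL (covChain L) (fun j => MvPolynomial.degreeOf j (covChain L (j : ℕ)))
      rfl (fun j => rfl)
      (fun j => by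
        show covChain L ((j : ℕ) + 1) = _
        simp only [covChain]
        rw [dif_pos j.isLt])
      (fun j => S j.succ) (fun j => hS j.succ)
    rw [← hT, ← hB] at hih
    -- arithmetic
    have ha : (0 : ℚ) < ((S 0).card : ℚ) := by
      exact_mod_cast Finset.card_pos.2 (hS 0)
    have hTc : (T.card : ℚ) = ∏ j : Fin n, ((S j.succ).card : ℚ) := by
      rw [hT]
      push_cast [Fintype.card_piFinset]
      rfl
    have hcast : (((Fintype.piFinset S).filter (fun f => MvPolynomial.eval f P = 0)).card : ℚ)
        ≤ (B.card : ℚ) * ((S 0).card : ℚ) + (T.card : ℚ) * (d 0 : ℚ) := by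
      exact_mod_cast htotal
    rw [Fin.prod_univ_succ, Fin.sum_univ_succ]
    simp only [← hdsucc] at hih
    set a : ℚ := ((S 0).card : ℚ)
    set Tc : ℚ := ∏ j : Fin n, ((S j.succ).card : ℚ)
    set Sig : ℚ := ∑ j : Fin n, (d j.succ : ℚ) / ((S j.succ).card : ℚ)
    have hexp : a * Tc * ((d 0 : ℚ) / a + Sig) = Tc * (d 0 : ℚ) + (Tc * Sig) * a := by
      field_simp
    rw [hexp]
    calc (((Fintype.piFinset S).filter (fun f => MvPolynomial.eval f P = 0)).card : ℚ)
        ≤ (B.card : ℚ) * a + (T.card : ℚ) * (d 0 : ℚ) := hcast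
      _ ≤ (Tc * Sig) * a + Tc * (d 0 : ℚ) := by
          gcongr ?_ * a + ?_ * _ <;> · first | exact hih | exact le_of_eq hTc
      _ = Tc * (d 0 : ℚ) + (Tc * Sig) * a := by ring

end SZAux

/-- Schwartz–Zippel-type zero counting: let `P` be a nonzero polynomial in `v` variables,
with `d_j` the degree of `α_j` in the iterated leading-coefficient chain
`P_1 = P`, `P_{j+1} = coefficient of α_j^{d_j} in P_j`. For finite nonempty sets
`S_1, …, S_v ⊆ F`, the number of zeros of `P` in `S_1 × ⋯ × S_v` is at most
`|S_1 × ⋯ × S_v| · (d_1/|S_1| + ⋯ + d_v/|S_v|)`. -/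
theorem schwartz_zippel_count {F : Type*} [Field F] [DecidableEq F] {v : ℕ}
    (P : MvPolynomial (Fin v) F) (hP : P ≠ 0)
    (Q : ℕ → MvPolynomial (Fin v) F) (d : Fin v → ℕ)
    (hQ0 : Q 0 = P)
    (hd : ∀ j : Fin v, d j = MvPolynomial.degreeOf j (Q j))
    (hQ : ∀ j : Fin v, Q ((j : ℕ) + 1) = coeffOfVar j (d j) (Q (j : ℕ)))
    (S : Fin v → Finset F) (hS : ∀ j, (S j).Nonempty) :
    (((Fintype.piFinset S).filter (fun f => MvPolynomial.eval f P = 0)).card : ℚ)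
      ≤ (∏ j : Fin v, ((S j).card : ℚ)) * ∑ j : Fin v, (d j : ℚ) / ((S j).card : ℚ) := by
  exact sz_aux v P hP Q d hQ0 hd hQ S hS
end

section
/- The set of derivative orders of the pivot node remains a lower set after coalescence: if U₁ = {(a,b) ∈ ℕ² : (a,b) ≤ (p_x, p_y) componentwise-lexicographically bounded, forming a lower set} is a lower set in ℕ² (under the partial order (a,b) ≤ (c,d) iff a ≤ c and b ≤ d) and n additional elements are inserted into ℕ² so that the resulting set of |U₁| + n elements is required to be a lower set with respect to this partial order, then among all lower sets of that cardinality containing U₁ obtained by shifts minimizing the total shift order, the resulting set is unique. -/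
open Finset

/-- Height bound of column `i` of the derivative order space: columns `0, …, K+T−1`
have height `L`, later columns have height `m`. -/
def colBound (K T L m i : ℕ) : ℕ := if i < K + T then L else m

/-- The derivative order space (region): columns `0, …, 2K+2T−2`, column `i` containing
the derivative orders `(i, j)` with `j < colBound K T L m i`. -/
def region (K T L m : ℕ) : Finset (ℕ × ℕ) :=
  ((Finset.range (2 * K + 2 * T - 1)) ×ˢ (Finset.range L)).filter
    (fun p => p.2 < colBound K T L m p.1)

/-- `S` fills columns greedily in order: if some later column `i'` is inhabited, then
every earlier column `i` is full up to its height bound. -/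
def FillsGreedily (K T L m : ℕ) (S : Finset (ℕ × ℕ)) : Prop :=
  ∀ i i' j', i < i' → (i', j') ∈ S → ∀ j < colBound K T L m i, (i, j) ∈ S

/-- Uniqueness of the derivative set of the pivot node after coalescence: a lower set of
given cardinality `|U₁| + n` inside the column-bounded region, containing the lower set
`U₁` and filling columns greedily in order, is unique. -/
theorem lowerSet_coalescence_unique (K T L m n : ℕ)
    (hK : 1 ≤ K) (hT : 1 ≤ T) (hm : 1 ≤ m) (hmL : m ≤ L)
    (U S₁ S₂ : Finset (ℕ × ℕ))
    (hUlow : IsLowerSet (U : Set (ℕ × ℕ)))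
    (hU1 : U ⊆ S₁) (hU2 : U ⊆ S₂)
    (hS1reg : S₁ ⊆ region K T L m) (hS2reg : S₂ ⊆ region K T L m)
    (hlow1 : IsLowerSet (S₁ : Set (ℕ × ℕ))) (hlow2 : IsLowerSet (S₂ : Set (ℕ × ℕ)))
    (hg1 : FillsGreedily K T L m S₁) (hg2 : FillsGreedily K T L m S₂)
    (hc1 : S₁.card = U.card + n) (hc2 : S₂.card = U.card + n) :
    S₁ = S₂ := by
  have key : ∀ a ∈ S₁, ∀ b ∈ S₂, a ∉ S₂ → b ∉ S₁ → False := by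
    rintro ⟨i, j⟩ ha ⟨i', j'⟩ hb ha2 hb1
    have hreg1 := hS1reg ha
    have hreg2 := hS2reg hb
    simp only [region, mem_filter, mem_product, mem_range] at hreg1 hreg2
    rcases lt_trichotomy i i' with h | h | h
    · exact ha2 (hg2 i i' j' h hb j hreg1.2)
    · subst h
      rcases le_or_gt j j' with hj | hj
      · exact ha2 (hlow2 (Prod.mk_le_mk.mpr ⟨le_refl i, hj⟩) hb)
      · exact hb1 (hlow1 (Prod.mk_le_mk.mpr ⟨le_refl i, hj.le⟩) ha)
    · exact hb1 (hg1 i' i j h ha j' hreg2.2)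
  have hsub : S₁ ⊆ S₂ ∨ S₂ ⊆ S₁ := by
    by_contra hcon
    push_neg at hcon
    obtain ⟨h1, h2⟩ := hcon
    obtain ⟨a, ha, ha2⟩ := not_subset.mp h1
    obtain ⟨b, hb, hb1⟩ := not_subset.mp h2
    exact key a ha b hb ha2 hb1
  rcases hsub with h | h
  · exact Finset.eq_of_subset_of_card_le h (by omega)
  · exact (Finset.eq_of_subset_of_card_le h (by omega)).symm
end

section
/- A square matrix M whose rows are indexed by derivative orders (a,b) covering all monomial exponents of a polynomial P(x,y), with row (a,b) consisting of the values ∂^{a+b}/∂x^a∂y^b of each monomial of P evaluated at a single point (x₀,y₀), is triangular up to row/column permutation with nonzero diagonal, and hence nonsingular, provided the characteristic of the field exceeds the degree of P. -/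
/-- A square matrix whose rows are indexed by derivative orders `(a,b)` covering all
monomial exponents `(i,j) ∈ S` of a polynomial, with entry
`∂_x^a ∂_y^b (x^i y^j)|_{(x₀,y₀)} = (i!/(i−a)!)(j!/(j−b)!) x₀^{i−a} y₀^{j−b}`
(and `0` when `a > i` or `b > j`), is triangular up to permutation with nonzero diagonal,
hence nonsingular, provided the field characteristic exceeds the degree of the
polynomial (here: every `0 < n ≤ D` is nonzero in `F`, where all total degrees are
`≤ D`). -/
theorem derivative_matrix_nonsingular {F : Type*} [Field F] [DecidableEq F]
    (S : Finset (ℕ × ℕ)) (D : ℕ)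
    (hdeg : ∀ p ∈ S, p.1 + p.2 ≤ D)
    (hchar : ∀ n : ℕ, 0 < n → n ≤ D → (n : F) ≠ 0)
    (x₀ y₀ : F) :
    Matrix.det (fun ab ij : {p // p ∈ S} =>
      if ab.val.1 ≤ ij.val.1 ∧ ab.val.2 ≤ ij.val.2 then
        ((Nat.descFactorial ij.val.1 ab.val.1 * Nat.descFactorial ij.val.2 ab.val.2 : ℕ) : F)
          * x₀ ^ (ij.val.1 - ab.val.1) * y₀ ^ (ij.val.2 - ab.val.2)
      else 0) ≠ 0 := by
  classical
  set M : Matrix {p // p ∈ S} {p // p ∈ S} F := fun ab ij =>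
      if ab.val.1 ≤ ij.val.1 ∧ ab.val.2 ≤ ij.val.2 then
        ((Nat.descFactorial ij.val.1 ab.val.1 * Nat.descFactorial ij.val.2 ab.val.2 : ℕ) : F)
          * x₀ ^ (ij.val.1 - ab.val.1) * y₀ ^ (ij.val.2 - ab.val.2)
      else 0 with hM
  have hfac : ∀ m : ℕ, m ≤ D → ((m.factorial : ℕ) : F) ≠ 0 := by
    intro m
    induction m with
    | zero => simp
    | succ k ih =>
      intro h
      rw [Nat.factorial_succ, Nat.cast_mul]
      exact mul_ne_zero (hchar _ (Nat.succ_pos k) h)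
        (ih (le_of_lt (Nat.lt_of_succ_le h)))
  have hdiag : ∀ i : {p // p ∈ S}, M i i ≠ 0 := by
    intro i
    have h1 : i.val.1 ≤ D := le_trans (Nat.le_add_right _ _) (hdeg i.val i.2)
    have h2 : i.val.2 ≤ D := le_trans (Nat.le_add_left _ _) (hdeg i.val i.2)
    simp only [hM, le_refl, and_self, if_true, Nat.sub_self, pow_zero, mul_one,
      Nat.descFactorial_self, Nat.cast_mul]
    exact mul_ne_zero (hfac _ h1) (hfac _ h2)
  rw [Matrix.det_apply]
  have h1 : ∑ σ : Equiv.Perm {p // p ∈ S}, Equiv.Perm.sign σ • ∏ i, M (σ i) i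
      = ∏ i, M i i := by
    rw [Finset.sum_eq_single (1 : Equiv.Perm {p // p ∈ S})]
    · simp
    · intro σ _ hσ
      by_cases hall : ∀ i : {p // p ∈ S},
          (σ i).val.1 ≤ i.val.1 ∧ (σ i).val.2 ≤ i.val.2
      · exfalso
        apply hσ
        have hsum : ∑ i : {p // p ∈ S}, ((σ i).val.1 + (σ i).val.2)
            = ∑ i : {p // p ∈ S}, (i.val.1 + i.val.2) :=
          Equiv.sum_comp σ (fun i => i.val.1 + i.val.2)
        have heq := (Finset.sum_eq_sum_iff_of_le
          (fun i _ => add_le_add (hall i).1 (hall i).2)).mp hsum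
        ext i : 1
        have hw := heq i (Finset.mem_univ i)
        have h1 := (hall i).1
        have h2 := (hall i).2
        have : (σ i).val.1 = i.val.1 ∧ (σ i).val.2 = i.val.2 := by omega
        exact Subtype.ext (Prod.ext this.1 this.2)
      · push_neg at hall
        obtain ⟨i, hi⟩ := hall
        have hz : M (σ i) i = 0 := by
          simp only [hM]
          rw [if_neg]
          rintro ⟨ha, hb⟩
          exact absurd hb (not_le.mpr (hi ha))
        rw [show (∏ j, M (σ j) j) = 0 from Finset.prod_eq_zero (Finset.mem_univ i) hz,
          smul_zero]
    · simp
  rw [h1]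
  exact Finset.prod_ne_zero_iff.mpr (fun i _ => hdiag i)
end
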